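/- arXiv:1605.06755 — 2 statements merged into one kernel-verified Lean document; each statement's English description precedes it below -/
import Mathlib

section
/- For any path connected finite T₀ space P, the topological complexity equals the combinatorial complexity: TC(P) = CC(P). -/
open Set

/-- The finite fence poset `0 < 1 > 2 < ⋯ m` on `m+1` points. -/
def J (m : ℕ) : Type := Fin (m + 1)

namespace J

/-- The underlying natural number of a point of the fence. -/
def val {m : ℕ} (i : J m) : ℕ := @Fin.val (m + 1) i

instance (m : ℕ) : PartialOrder (J m) where
  le i j := i.val = j.val ∨ (j.val % 2 = 1 ∧ (j.val = i.val + 1 ∨ i.val = j.val + 1))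
  le_refl i := Or.inl rfl
  le_trans a b c h₁ h₂ := by
    show a.val = c.val ∨ (c.val % 2 = 1 ∧ (c.val = a.val + 1 ∨ a.val = c.val + 1))
    rcases h₁ with h₁ | h₁ <;> rcases h₂ with h₂ | h₂ <;> omega
  le_antisymm a b h₁ h₂ := by
    have : a.val = b.val := by rcases h₁ with h₁ | h₁ <;> rcases h₂ with h₂ | h₂ <;> omega
    exact @Fin.val_injective (m + 1) a b this

instance (m : ℕ) : Finite (J m) := inferInstanceAs (Finite (Fin (m + 1)))

/-- The initial point `0` of the fence. -/
def zero {m : ℕ} : J m := (0 : Fin (m + 1))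

/-- The terminal point `m` of the fence. -/
def last {m : ℕ} : J m := Fin.last m

end J

/-- The Alexandrov topology on a preordered set: open sets are the lower sets (ideals). -/
def alexTop (α : Type*) [Preorder α] : TopologicalSpace α where
  IsOpen s := IsLowerSet s
  isOpen_univ := isLowerSet_univ
  isOpen_inter _ _ := IsLowerSet.inter
  isOpen_sUnion _ := isLowerSet_sUnion

instance (m : ℕ) : TopologicalSpace (J m) := alexTop (J m)

/-- `P × P` can be covered by `n` open sets, each admitting a continuous section of
`q_m : P^{J_m} → P × P`, `γ ↦ (γ(0), γ(m))`. -/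
def hasCCCover (P : Type*) [TopologicalSpace P] (m n : ℕ) : Prop :=
  ∃ U : Fin n → Set (P × P), (∀ i, IsOpen (U i)) ∧ (⋃ i, U i) = Set.univ ∧
    ∀ i, ∃ s : C(U i, C(J m, P)),
      ∀ x : U i, (s x) J.zero = (x : P × P).1 ∧ (s x) J.last = (x : P × P).2

/-- The combinatorial complexity at length `m`. -/
noncomputable def CCm (P : Type*) [TopologicalSpace P] (m : ℕ) : ℕ∞ :=
  sInf ((↑) '' {n : ℕ | hasCCCover P m n})

/-- The combinatorial complexity `CC(P) = min_m CC_m(P)`. -/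
noncomputable def CC (P : Type*) [TopologicalSpace P] : ℕ∞ := ⨅ m, CCm P m

/-- `X × X` can be covered by `n` open sets, each admitting a continuous section of the
path fibration `X^I → X × X`. -/
def hasTCCover (X : Type*) [TopologicalSpace X] (n : ℕ) : Prop :=
  ∃ U : Fin n → Set (X × X), (∀ i, IsOpen (U i)) ∧ (⋃ i, U i) = Set.univ ∧
    ∀ i, ∃ s : C(U i, C(unitInterval, X)),
      ∀ x : U i, (s x) 0 = (x : X × X).1 ∧ (s x) 1 = (x : X × X).2

/-- Farber's topological complexity. -/
noncomputable def topComplexity (X : Type*) [TopologicalSpace X] : ℕ∞ :=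
  sInf ((↑) '' {n : ℕ | hasTCCover X n})

/-- A subset is contractible in the ambient space when its inclusion is null-homotopic. -/
def ContractibleIn {X : Type*} [TopologicalSpace X] (A : Set X) : Prop :=
  ∃ x₀ : X, ContinuousMap.Homotopic ⟨Subtype.val, continuous_subtype_val⟩
    (ContinuousMap.const A x₀)

/-- The (unreduced) Lusternik–Schnirelmann category. -/
noncomputable def cat (X : Type*) [TopologicalSpace X] : ℕ∞ :=
  sInf ((↑) '' {n : ℕ | ∃ U : Fin n → Set X, (∀ i, IsOpen (U i)) ∧ (⋃ i, U i) = Set.univ ∧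
    ∀ i, ContractibleIn (U i)})

section AuxPath

noncomputable def mccordPath {X : Type*} [TopologicalSpace X] (a b : X)
    (h : ∀ U : Set X, IsOpen U → b ∈ U → a ∈ U) : Path a b where
  toFun t := if t = 1 then b else a
  continuous_toFun := by
    rw [continuous_def]
    intro V hV
    by_cases hb : b ∈ V
    · have ha := h V hV hb
      have : (fun t : unitInterval => if t = 1 then b else a) ⁻¹' V = Set.univ := by
        ext t; simp only [Set.mem_preimage, Set.mem_univ, iff_true]
        split <;> assumption
      rw [this]; exact isOpen_univ
    · by_cases ha : a ∈ V
      · have : (fun t : unitInterval => if t = 1 then b else a) ⁻¹' V = {(1 : unitInterval)}ᶜ := by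
          ext t; simp only [Set.mem_preimage, Set.mem_compl_iff, Set.mem_singleton_iff]
          split <;> simp_all
        rw [this]; exact isOpen_compl_singleton
      · have : (fun t : unitInterval => if t = 1 then b else a) ⁻¹' V = ∅ := by
          ext t; simp only [Set.mem_preimage, Set.mem_empty_iff_false, iff_false]
          split <;> assumption
        rw [this]; exact isOpen_empty
  source' := by norm_num [show (0 : unitInterval) ≠ 1 by norm_num [Subtype.ext_iff]]
  target' := by simp

/-- Element of the fence from a natural number. -/
def Jmk {m : ℕ} (k : ℕ) (h : k < m + 1) : J m := (⟨k, h⟩ : Fin (m + 1))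

lemma Jmk_val {m k : ℕ} (h : k < m + 1) : J.val (Jmk (m := m) k h) = k := rfl

lemma J_le_of_val {m : ℕ} {a b : J m}
    (h : J.val a = J.val b ∨ (J.val b % 2 = 1 ∧ (J.val b = J.val a + 1 ∨ J.val a = J.val b + 1))) :
    a ≤ b := h

lemma J_isOpen_iff {m : ℕ} {s : Set (J m)} : IsOpen s ↔ IsLowerSet s := Iff.rfl

lemma J_mem_of_le {m : ℕ} {U : Set (J m)} (hU : IsOpen U) {a b : J m} (hab : a ≤ b)
    (hb : b ∈ U) : a ∈ U := (J_isOpen_iff.mp hU) hab hb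

noncomputable def stepPath {m : ℕ} (k : ℕ) (h : k + 1 < m + 1) :
    Path (Jmk (m := m) k (by omega)) (Jmk (k + 1) h) :=
  if hpar : (k + 1) % 2 = 1 then
    mccordPath (Jmk k (by omega)) (Jmk (k + 1) h) (fun U hU hb =>
      J_mem_of_le hU (J_le_of_val (Or.inr ⟨by simpa [Jmk_val] using hpar,
        Or.inl (by simp [Jmk_val])⟩)) hb)
  else
    (mccordPath (Jmk (k + 1) h) (Jmk k (by omega)) (fun U hU hb =>
      J_mem_of_le hU (J_le_of_val (Or.inr ⟨by simp only [Jmk_val]; omega,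
        Or.inr (by simp [Jmk_val])⟩)) hb)).symm

lemma J_zero_eq {m : ℕ} : (J.zero : J m) = Jmk 0 (by omega) :=
  @Fin.val_injective (m + 1) _ _ (by simp [J.zero, Jmk])

lemma J_last_eq {m : ℕ} : (J.last : J m) = Jmk m (by omega) :=
  @Fin.val_injective (m + 1) _ _ (by simp [J.last, Jmk])

noncomputable def pathTo {m : ℕ} : ∀ (k : ℕ) (h : k < m + 1), Path (J.zero : J m) (Jmk k h)
  | 0, h => (Path.refl _).cast rfl J_zero_eq
  | (k + 1), h => (pathTo k (by omega)).trans (stepPath k h)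

noncomputable def pathJ (m : ℕ) : Path (J.zero : J m) (J.last : J m) :=
  (pathTo m (by omega)).cast rfl J_last_eq
lemma cc_to_tc {P : Type} [TopologicalSpace P] {m n : ℕ} (h : hasCCCover P m n) :
    hasTCCover P n := by
  obtain ⟨U, h1, h2, h3⟩ := h
  refine ⟨U, h1, h2, fun i => ?_⟩
  obtain ⟨s, hs⟩ := h3 i
  refine ⟨⟨fun x => (s x).comp (pathJ m).toContinuousMap,
    (ContinuousMap.continuous_precomp _).comp s.continuous⟩, fun x => ?_⟩
  constructor
  · show s x ((pathJ m) 0) = _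
    rw [(pathJ m).source]
    exact (hs x).1
  · show s x ((pathJ m) 1) = _
    rw [(pathJ m).target]
    exact (hs x).2
lemma exists_fence {A P : Type} [TopologicalSpace A] [Finite A] [PartialOrder P] [Finite P]
    [TopologicalSpace P] (hP : ∀ s : Set P, IsOpen s ↔ IsLowerSet s)
    (Γ : C(unitInterval, C(A, P))) :
    ∃ N₀ : ℕ, 0 < N₀ ∧ ∀ N, N₀ ≤ N → ∃ h : ℕ → C(A, P),
      h 0 = Γ 0 ∧ h (2 * N) = Γ 1 ∧
      ∀ k, k < N → (∀ x, h (2 * k) x ≤ h (2 * k + 1) x) ∧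
        (∀ x, h (2 * k + 2) x ≤ h (2 * k + 1) x) := by
  set c : unitInterval → Set unitInterval :=
    fun s => Γ ⁻¹' {g : C(A, P) | ∀ x, g x ≤ Γ s x} with hc
  have hopen : ∀ s, IsOpen (c s) := by
    intro s
    apply (Γ.continuous).isOpen_preimage
    have : {g : C(A, P) | ∀ x, g x ≤ Γ s x}
        = ⋂ x : A, {g : C(A, P) | Set.MapsTo g {x} (Set.Iic (Γ s x))} := by
      ext g
      simp [Set.MapsTo]
    rw [this]
    exact isOpen_iInter_of_finite fun x =>
      ContinuousMap.isOpen_setOf_mapsTo isCompact_singleton ((hP _).2 (isLowerSet_Iic _))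
  have hcover : (Set.univ : Set unitInterval) ⊆ ⋃ s, c s :=
    fun t _ => Set.mem_iUnion.2 ⟨t, fun x => le_refl _⟩
  obtain ⟨δ, hδ, hball⟩ := lebesgue_number_lemma_of_metric isCompact_univ hopen hcover
  obtain ⟨n₀, hn₀⟩ := exists_nat_one_div_lt hδ
  refine ⟨n₀ + 1, Nat.succ_pos _, fun N hN => ?_⟩
  have hNpos : 0 < N := lt_of_lt_of_le (Nat.succ_pos _) hN
  have hNR : (0 : ℝ) < N := by exact_mod_cast hNpos
  have hNδ : 1 / (2 * (N : ℝ)) < δ := by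
    have h1 : 1 / (2 * (N : ℝ)) ≤ 1 / ((n₀ : ℝ) + 1) := by
      apply one_div_le_one_div_of_le
      · positivity
      · have : ((n₀ : ℝ) + 1) ≤ (N : ℝ) := by exact_mod_cast hN
        linarith
    linarith
  have hpt : ∀ j : ℕ, min ((j : ℝ) / (2 * N)) 1 ∈ unitInterval := by
    intro j
    constructor
    · apply le_min
      · positivity
      · norm_num
    · exact min_le_right _ _
  set pt : ℕ → unitInterval := fun j => ⟨min ((j : ℝ) / (2 * N)) 1, hpt j⟩ with hptdef
  have hpt_eq : ∀ j : ℕ, j ≤ 2 * N → (pt j : ℝ) = (j : ℝ) / (2 * N) := by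
    intro j hj
    show min ((j : ℝ) / (2 * N)) 1 = _
    rw [min_eq_left]
    rw [div_le_one (by positivity)]
    exact_mod_cast hj
  have key : ∀ k : ℕ, ∃ s : unitInterval, k < N →
      (∀ x, Γ (pt (2 * k)) x ≤ Γ s x) ∧ (∀ x, Γ (pt (2 * k + 2)) x ≤ Γ s x) := by
    intro k
    by_cases hk : k < N
    · obtain ⟨s, hsb⟩ := hball (pt (2 * k + 1)) (Set.mem_univ _)
      refine ⟨s, fun _ => ⟨?_, ?_⟩⟩
      · refine hsb ?_
        rw [Metric.mem_ball, Subtype.dist_eq, hpt_eq _ (by omega), hpt_eq _ (by omega),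
          Real.dist_eq]
        rw [div_sub_div_same]
        have h2 : ((2 * k : ℕ) : ℝ) - ((2 * k + 1 : ℕ) : ℝ) = -1 := by
          push_cast; ring
        rw [h2]
        rw [abs_div, abs_neg, abs_one, abs_of_pos (by positivity)]
        exact hNδ
      · refine hsb ?_
        rw [Metric.mem_ball, Subtype.dist_eq, hpt_eq _ (by omega), hpt_eq _ (by omega),
          Real.dist_eq]
        rw [div_sub_div_same]
        have h2 : ((2 * k + 2 : ℕ) : ℝ) - ((2 * k + 1 : ℕ) : ℝ) = 1 := by
          push_cast; ring
        rw [h2]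
        rw [abs_div, abs_one, abs_of_pos (by positivity)]
        exact hNδ
    · exact ⟨0, fun hkk => absurd hkk hk⟩
  choose S hS using key
  classical
  refine ⟨fun j => if j % 2 = 1 then Γ (S ((j - 1) / 2)) else Γ (pt j), ?_, ?_, ?_⟩
  · simp only [if_neg (by omega : ¬((0 : ℕ) % 2 = 1))]
    congr 1
    apply Subtype.ext
    simp [hptdef]
  · simp only [if_neg (by omega : ¬((2 * N) % 2 = 1))]
    congr 1
    apply Subtype.ext
    have h21 : ((2 * N : ℕ) : ℝ) / (2 * (N : ℝ)) = 1 := by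
      rw [div_eq_one_iff_eq (by positivity)]
      push_cast
      ring
    simp [hptdef, h21]
    exact le_of_eq (div_self (by positivity : (2 * (N : ℝ)) ≠ 0)).symm
  · intro k hk
    have e1 : ¬((2 * k) % 2 = 1) := by omega
    have e2 : (2 * k + 1) % 2 = 1 := by omega
    have e3 : ¬((2 * k + 2) % 2 = 1) := by omega
    have e4 : (2 * k + 1 - 1) / 2 = k := by omega
    constructor
    · intro x
      simp only [if_neg e1, if_pos e2, e4]
      exact (hS k hk).1 x
    · intro x
      simp only [if_neg e3, if_pos e2, e4]
      exact (hS k hk).2 x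
lemma tc_to_cc {P : Type} [PartialOrder P] [Finite P] [TopologicalSpace P]
    (hP : ∀ s : Set P, IsOpen s ↔ IsLowerSet s) {n : ℕ} (h : hasTCCover P n) :
    ∃ m, hasCCCover P m n := by
  obtain ⟨U, hUopen, hUcov, hsec⟩ := h
  choose s hs using hsec
  set Γ : ∀ i, C(unitInterval, C(U i, P)) := fun i =>
    ContinuousMap.curry ((ContinuousMap.uncurry (s i)).comp
      ⟨Prod.swap, continuous_swap⟩) with hΓdef
  have hΓ : ∀ i t x, Γ i t x = s i x t := fun _ _ _ => rfl
  have hfence := fun i => exists_fence hP (Γ i)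
  choose N₀ hN₀pos hfence using hfence
  set N : ℕ := (Finset.univ.sup N₀) + 1 with hNdef
  have hNi : ∀ i, N₀ i ≤ N :=
    fun i => le_trans (Finset.le_sup (Finset.mem_univ i)) (Nat.le_succ _)
  choose h hh0 hh1 hhrel using fun i => hfence i N (hNi i)
  refine ⟨2 * N, U, hUopen, hUcov, fun i => ?_⟩
  have hmono : ∀ (x : U i) (j j' : J (2 * N)), j ≤ j' →
      h i (J.val j) x ≤ h i (J.val j') x := by
    intro x j j' hle
    have hle' : J.val j = J.val j' ∨
        (J.val j' % 2 = 1 ∧ (J.val j' = J.val j + 1 ∨ J.val j = J.val j' + 1)) := hle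
    have hlt : J.val j' < 2 * N + 1 := @Fin.isLt (2 * N + 1) j'
    rcases hle' with he | ⟨hodd, hadj⟩
    · rw [he]
    · set k := J.val j' / 2 with hkdef
      have hk : k < N := by omega
      rcases hadj with h1 | h1
      · rw [show J.val j = 2 * k from by omega, show J.val j' = 2 * k + 1 from by omega]
        exact (hhrel i k hk).1 x
      · rw [show J.val j = 2 * k + 2 from by omega, show J.val j' = 2 * k + 1 from by omega]
        exact (hhrel i k hk).2 x
  have hcont1 : ∀ x : U i, Continuous fun j : J (2 * N) => h i (J.val j) x := by
    intro x
    rw [continuous_def]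
    intro V hV
    show IsLowerSet _
    intro j j' hle hj
    exact (hP V).1 hV (hmono x j' j hle) hj
  have hcont2 : Continuous fun x : U i => (⟨_, hcont1 x⟩ : C(J (2 * N), P)) := by
    rw [ContinuousMap.continuous_compactOpen]
    intro K hK V hV
    simp only [ContinuousMap.coe_mk]
    have : {x : U i | Set.MapsTo (fun j : J (2 * N) => h i (J.val j) x) K V}
        = ⋂ j ∈ K, (fun x : U i => h i (J.val j) x) ⁻¹' V := by
      ext x
      simp [Set.MapsTo]
    rw [this]
    exact (Set.toFinite K).isOpen_biInter
      fun j _ => (h i (J.val j)).continuous.isOpen_preimage V hV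
  refine ⟨⟨_, hcont2⟩, fun x => ⟨?_, ?_⟩⟩
  · show h i (J.val (J.zero : J (2 * N))) x = _
    have hz : J.val (J.zero : J (2 * N)) = 0 := rfl
    rw [hz, hh0 i]
    exact (hs i x).1
  · show h i (J.val (J.last : J (2 * N))) x = _
    have hl : J.val (J.last : J (2 * N)) = 2 * N := rfl
    rw [hl, hh1 i]
    exact (hs i x).2
/-- For a path connected finite space `P`, `TC(P) = CC(P)`. -/
theorem TC_eq_CC
    (P : Type) [PartialOrder P] [Finite P] [TopologicalSpace P] [PathConnectedSpace P]
    (hP : ∀ s : Set P, IsOpen s ↔ IsLowerSet s) :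
    topComplexity P = CC P := by
  apply le_antisymm
  · rw [CC]
    apply le_iInf
    intro m
    apply le_sInf
    rintro b ⟨k, hk, rfl⟩
    exact sInf_le ⟨k, cc_to_tc hk, rfl⟩
  · apply le_sInf
    rintro b ⟨k, hk, rfl⟩
    obtain ⟨m, hm⟩ := tc_to_cc hP hk
    exact le_trans (iInf_le _ m) (sInf_le ⟨k, hm, rfl⟩)
end AuxPath
end

section
/- Combinatorial complexity is a homotopy invariant of finite spaces: if path connected finite T₀ spaces P and Q are homotopy equivalent (equivalently, have isomorphic cores), then CC(P) = CC(Q). -/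
open Set

section Alex
variable {X Y : Type*} [Preorder X] [Preorder Y] [TopologicalSpace X] [TopologicalSpace Y]

lemma alex_mono_continuous (hX : ∀ s : Set X, IsOpen s ↔ IsLowerSet s)
    (hY : ∀ s : Set Y, IsOpen s ↔ IsLowerSet s) {f : X → Y} (hf : Monotone f) :
    Continuous f := by
  rw [continuous_def]
  intro s hs
  exact (hX _).mpr fun a b hba ha => ((hY s).mp hs) (hf hba) ha

lemma alex_continuous_mono (hX : ∀ s : Set X, IsOpen s ↔ IsLowerSet s)
    (hY : ∀ s : Set Y, IsOpen s ↔ IsLowerSet s) {f : X → Y} (hf : Continuous f) :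
    Monotone f := by
  intro a b hab
  have h1 : IsOpen (f ⁻¹' {y | y ≤ f b}) :=
    hf.isOpen_preimage _ ((hY _).mpr fun y z hz hy => hz.trans hy)
  exact ((hX _).mp h1) hab (le_refl (f b))

lemma alex_prod (hX : ∀ s : Set X, IsOpen s ↔ IsLowerSet s)
    (hY : ∀ s : Set Y, IsOpen s ↔ IsLowerSet s) :
    ∀ s : Set (X × Y), IsOpen s ↔ IsLowerSet s := by
  intro s
  constructor
  · intro hs a b hba ha
    obtain ⟨u, v, hu, hv, hau, hav, huv⟩ := (isOpen_prod_iff.mp hs) a.1 a.2 ha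
    exact huv ⟨((hX u).mp hu) hba.1 hau, ((hY v).mp hv) hba.2 hav⟩
  · intro hs
    rw [isOpen_iff_forall_mem_open]
    intro a ha
    refine ⟨{y | y ≤ a.1} ×ˢ {y | y ≤ a.2}, ?_, ?_, ?_⟩
    · rintro ⟨b1, b2⟩ ⟨h1, h2⟩
      exact hs (Prod.mk_le_mk.mpr ⟨h1, h2⟩) ha
    · exact (((hX _).mpr fun y z hz hy => hz.trans hy).prod
        (((hY _).mpr fun y z hz hy => hz.trans hy)))
    · exact ⟨le_refl _, le_refl _⟩

lemma alex_subtype (hX : ∀ s : Set X, IsOpen s ↔ IsLowerSet s) (A : Set X) :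
    ∀ s : Set A, IsOpen s ↔ IsLowerSet s := by
  intro s
  constructor
  · intro hs a b hba ha
    obtain ⟨t, ht, rfl⟩ := isOpen_induced_iff.mp hs
    exact ((hX t).mp ht) hba ha
  · intro hs
    rw [isOpen_induced_iff]
    refine ⟨⋃ a ∈ s, {y | y ≤ (a : X)}, isOpen_biUnion fun a _ =>
      (hX _).mpr fun y z hz hy => hz.trans hy, ?_⟩
    ext x
    simp only [mem_preimage, mem_iUnion, mem_setOf_eq]
    constructor
    · rintro ⟨a, ha, hxa⟩
      exact hs hxa ha
    · intro hx
      exact ⟨x, hx, le_refl _⟩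

end Alex

lemma alex_J (m : ℕ) : ∀ s : Set (J m), IsOpen s ↔ IsLowerSet s := fun _ => Iff.rfl

lemma J.le_iff {m : ℕ} {i j : J m} :
    i ≤ j ↔ (J.val i = J.val j ∨ (J.val j % 2 = 1 ∧ (J.val j = J.val i + 1 ∨ J.val i = J.val j + 1))) :=
  Iff.rfl

def jd (m t : ℕ) : J m := (⟨min t m, by omega⟩ : Fin (m + 1))

lemma jd_val (m t : ℕ) : J.val (jd m t) = min t m := rfl

lemma jd_zero (m : ℕ) : jd m 0 = J.zero := by
  apply @Fin.val_injective (m+1)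
  show min 0 m = (0 : Fin (m+1)).val
  simp

lemma jd_last (m : ℕ) {t : ℕ} (ht : m ≤ t) : jd m t = J.last := by
  apply @Fin.val_injective (m+1)
  show min t m = (Fin.last m).val
  simp [Fin.last, Nat.min_eq_right ht]

lemma jd_up (m t : ℕ) (ht : t % 2 = 0) : jd m t ≤ jd m (t+1) := by
  rw [J.le_iff, jd_val, jd_val]
  omega

lemma jd_down (m t : ℕ) (ht : t % 2 = 1) : jd m (t+1) ≤ jd m t := by
  rw [J.le_iff, jd_val, jd_val]
  omega

section Fence

variable {P : Type*} [Preorder P]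

open Classical in
/-- An upper bound of two consecutive fence maps. -/
noncomputable def fenceTop (c : ℕ → P → P) (i : ℕ) : P → P :=
  if ∀ y, c i y ≤ c (i+1) y then c (i+1) else c i

lemma fenceTop_le_left (c : ℕ → P → P) (i : ℕ)
    (h : (∀ y, c i y ≤ c (i+1) y) ∨ (∀ y, c (i+1) y ≤ c i y)) (y : P) :
    c i y ≤ fenceTop c i y := by
  unfold fenceTop
  split_ifs with hc
  · exact hc y
  · exact le_refl _

lemma fenceTop_le_right (c : ℕ → P → P) (i : ℕ)
    (h : (∀ y, c i y ≤ c (i+1) y) ∨ (∀ y, c (i+1) y ≤ c i y)) (y : P) :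
    c (i+1) y ≤ fenceTop c i y := by
  unfold fenceTop
  split_ifs with hc
  · exact le_refl _
  · exact (h.resolve_left hc) y

lemma fenceTop_mono (c : ℕ → P → P) (i : ℕ) (hc : ∀ j, Monotone (c j)) :
    Monotone (fenceTop c i) := by
  unfold fenceTop
  split_ifs <;> apply hc

lemma fenceTop_cont [TopologicalSpace P] (c : ℕ → P → P) (i : ℕ)
    (hc : ∀ j, Continuous (c j)) : Continuous (fenceTop c i) := by
  unfold fenceTop
  split_ifs <;> apply hc

end Fence

section Phi

variable {P Q : Type*} [Preorder P] [Preorder Q]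

/-- The transferred path: a zigzag from `p` to `g f p`, then `g` applied to the
path `γ` in `Q`, then a zigzag from `g f p'` to `p'`. -/
noncomputable def phi (c : ℕ → P → P) (k m : ℕ) (g : Q → P) (γ : J m → Q)
    (p p' : P) (r : ℕ) : P :=
  if r < 2*k then
    (if r % 2 = 0 then c (k - r/2) p else fenceTop c (k - r/2 - 1) p)
  else if r ≤ 2*k + (m + m % 2) then g (γ (jd m (r - 2*k)))
  else if r % 2 = 0 then c ((r - 2*k - (m + m % 2))/2) p'
  else fenceTop c ((r - 2*k - (m + m % 2) - 1)/2) p'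

variable (c : ℕ → P → P) (k m : ℕ) (g : Q → P) (γ : J m → Q) (p p' : P)

lemma phi_seg1_even {r : ℕ} (h1 : r < 2*k) (h2 : r % 2 = 0) :
    phi c k m g γ p p' r = c (k - r/2) p := by
  unfold phi; rw [if_pos h1, if_pos h2]

lemma phi_seg1_odd {r : ℕ} (h1 : r < 2*k) (h2 : r % 2 = 1) :
    phi c k m g γ p p' r = fenceTop c (k - r/2 - 1) p := by
  unfold phi; rw [if_pos h1, if_neg (by omega)]

lemma phi_seg2 {r : ℕ} (h1 : ¬ r < 2*k) (h2 : r ≤ 2*k + (m + m % 2)) :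
    phi c k m g γ p p' r = g (γ (jd m (r - 2*k))) := by
  unfold phi; rw [if_neg h1, if_pos h2]

lemma phi_seg3_even {r : ℕ} (h1 : ¬ r < 2*k) (h2 : ¬ r ≤ 2*k + (m + m % 2))
    (h3 : r % 2 = 0) :
    phi c k m g γ p p' r = c ((r - 2*k - (m + m % 2))/2) p' := by
  unfold phi; rw [if_neg h1, if_neg h2, if_pos h3]

lemma phi_seg3_odd {r : ℕ} (h1 : ¬ r < 2*k) (h2 : ¬ r ≤ 2*k + (m + m % 2))
    (h3 : r % 2 = 1) :
    phi c k m g γ p p' r = fenceTop c ((r - 2*k - (m + m % 2) - 1)/2) p' := by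
  unfold phi; rw [if_neg h1, if_neg h2, if_neg (by omega)]

lemma phi_mono_x (hg : Monotone g) (hc : ∀ j, Monotone (c j))
    {γ' : J m → Q} {p₂ p'₂ : P}
    (hγ : ∀ j, γ j ≤ γ' j) (hp : p ≤ p₂) (hp' : p' ≤ p'₂) (r : ℕ) :
    phi c k m g γ p p' r ≤ phi c k m g γ' p₂ p'₂ r := by
  unfold phi
  split_ifs
  · exact hc _ hp
  · exact fenceTop_mono c _ hc hp
  · exact hg (hγ _)
  · exact hc _ hp'
  · exact fenceTop_mono c _ hc hp'

lemma phi_fence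
    (hcstep : ∀ i < k, (∀ y, c i y ≤ c (i+1) y) ∨ (∀ y, c (i+1) y ≤ c i y))
    (hg : Monotone g) (hγ : Monotone γ)
    (hγ0 : g (γ J.zero) = c 0 p) (hγ1 : g (γ J.last) = c 0 p') :
    ∀ d, d + 1 ≤ 4*k + (m + m % 2) →
      (d % 2 = 0 → phi c k m g γ p p' d ≤ phi c k m g γ p p' (d+1)) ∧
      (d % 2 = 1 → phi c k m g γ p p' (d+1) ≤ phi c k m g γ p p' d) := by
  intro d hd
  set M := m + m % 2 with hM
  have hMeven : M % 2 = 0 := by omega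
  by_cases h1 : d + 1 < 2*k
  · constructor
    · intro hev
      rw [phi_seg1_even c k m g γ p p' (by omega) hev,
        phi_seg1_odd c k m g γ p p' h1 (by omega)]
      have he : k - d/2 = (k - (d+1)/2 - 1) + 1 := by omega
      rw [he]
      exact fenceTop_le_right c _ (hcstep _ (by omega)) p
    · intro hodd
      rw [phi_seg1_odd c k m g γ p p' (by omega) hodd,
        phi_seg1_even c k m g γ p p' h1 (by omega)]
      have he : k - (d+1)/2 = k - d/2 - 1 := by omega
      rw [he]
      exact fenceTop_le_left c _ (hcstep _ (by omega)) p
  · by_cases h2 : d + 1 = 2*k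
    · have hk : 0 < k := by omega
      have hodd' : d % 2 = 1 := by omega
      refine ⟨fun hev => by omega, fun _ => ?_⟩
      rw [phi_seg1_odd c k m g γ p p' (by omega) hodd',
        phi_seg2 c k m g γ p p' (by omega) (by omega)]
      have he : d + 1 - 2*k = 0 := by omega
      rw [he, jd_zero, hγ0]
      have he2 : k - d/2 - 1 = 0 := by omega
      rw [he2]
      exact fenceTop_le_left c _ (hcstep _ hk) p
    · by_cases h3 : d + 1 ≤ 2*k + M
      · -- both in segment 2
        have hd2 : ¬ d < 2*k := by omega
        constructor
        · intro hev
          rw [phi_seg2 c k m g γ p p' hd2 (by omega),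
            phi_seg2 c k m g γ p p' (by omega) h3]
          have he : d + 1 - 2*k = (d - 2*k) + 1 := by omega
          rw [he]
          exact hg (hγ (jd_up m _ (by omega)))
        · intro hodd
          rw [phi_seg2 c k m g γ p p' hd2 (by omega),
            phi_seg2 c k m g γ p p' (by omega) h3]
          have he : d + 1 - 2*k = (d - 2*k) + 1 := by omega
          rw [he]
          exact hg (hγ (jd_down m _ (by omega)))
      · by_cases h4 : d = 2*k + M
        · have hk : 0 < k := by omega
          refine ⟨fun _ => ?_, fun hodd => by omega⟩
          rw [phi_seg2 c k m g γ p p' (by omega) (by omega),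
            phi_seg3_odd c k m g γ p p' (by omega) (by omega) (by omega)]
          have he : d - 2*k = M := by omega
          rw [he, jd_last m (by omega), hγ1]
          have he2 : (d + 1 - 2*k - M - 1)/2 = 0 := by omega
          rw [he2]
          exact fenceTop_le_left c _ (hcstep _ hk) p'
        · -- both in segment 3
          have hd3 : 2*k + M < d := by omega
          constructor
          · intro hev
            rw [phi_seg3_even c k m g γ p p' (by omega) (by omega) hev,
              phi_seg3_odd c k m g γ p p' (by omega) (by omega) (by omega)]
            have he : (d - 2*k - M)/2 = (d + 1 - 2*k - M - 1)/2 := by omega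
            rw [he]
            exact fenceTop_le_left c _ (hcstep _ (by omega)) p'
          · intro hodd
            rw [phi_seg3_odd c k m g γ p p' (by omega) (by omega) hodd,
              phi_seg3_even c k m g γ p p' (by omega) (by omega) (by omega)]
            have he : (d + 1 - 2*k - M)/2 = (d - 2*k - M - 1)/2 + 1 := by omega
            rw [he]
            exact fenceTop_le_right c _ (hcstep _ (by omega)) p'

lemma phi_zero (hck : ∀ y, c k y = y) (hγ0 : g (γ J.zero) = c 0 p) :
    phi c k m g γ p p' 0 = p := by
  rcases Nat.eq_zero_or_pos k with hk | hk
  · rw [phi_seg2 c k m g γ p p' (by omega) (by omega)]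
    have he : 0 - 2*k = 0 := by omega
    rw [he, jd_zero, hγ0]
    subst hk
    exact hck p
  · rw [phi_seg1_even c k m g γ p p' (by omega) (by omega)]
    have he : k - 0/2 = k := by omega
    rw [he, hck]

lemma phi_last (hck : ∀ y, c k y = y) (hγ1 : g (γ J.last) = c 0 p') :
    phi c k m g γ p p' (4*k + (m + m % 2)) = p' := by
  rcases Nat.eq_zero_or_pos k with hk | hk
  · rw [phi_seg2 c k m g γ p p' (by omega) (by omega)]
    rw [jd_last m (by omega), hγ1]
    subst hk
    exact hck p'
  · rw [phi_seg3_even c k m g γ p p' (by omega) (by omega) (by omega)]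
    have he : (4*k + (m + m % 2) - 2*k - (m + m % 2))/2 = k := by omega
    rw [he, hck]

end Phi

section HomotopyFence

variable {P : Type} [PartialOrder P] [TopologicalSpace P]

/-- There is a fence of continuous maps from `a` to `b`. -/
def FenceTo (a b : P → P) : Prop :=
  ∃ (k : ℕ) (c : ℕ → P → P), c 0 = a ∧ c k = b ∧ (∀ i, Continuous (c i)) ∧
    ∀ i < k, (∀ y, c i y ≤ c (i+1) y) ∨ (∀ y, c (i+1) y ≤ c i y)

lemma FenceTo.extend {a w w' : P → P} (h : FenceTo a w) (hw' : Continuous w')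
    (hcomp : (∀ y, w y ≤ w' y) ∨ (∀ y, w' y ≤ w y)) : FenceTo a w' := by
  obtain ⟨k, c, h0, hk, hcont, hstep⟩ := h
  refine ⟨k+1, fun i => if i ≤ k then c i else w', ?_, ?_, ?_, ?_⟩
  · simpa using h0
  · simp
  · intro i
    by_cases hi : i ≤ k
    · simpa [hi] using hcont i
    · simpa [hi] using hw'
  · intro i hi
    by_cases hik : i < k
    · have e1 : i ≤ k := le_of_lt hik
      have e2 : i + 1 ≤ k := hik
      simpa [e1, e2] using hstep i hik
    · have hik' : i = k := by omega
      have e1 : i ≤ k := by omega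
      have e2 : ¬ (i + 1 ≤ k) := by omega
      simp only [e1, e2, if_true, if_false, if_pos, if_neg, not_false_iff]
      rw [hik', hk]
      exact hcomp

lemma homotopic_fence [Finite P]
    (hP : ∀ s : Set P, IsOpen s ↔ IsLowerSet s) {u v : C(P, P)}
    (h : u.Homotopic v) : FenceTo (⇑u) (⇑v) := by
  obtain ⟨H⟩ := h
  have key : ∀ t : unitInterval, ∃ W : Set unitInterval, IsOpen W ∧ t ∈ W ∧
      ∀ t' ∈ W, ∀ y : P, H (t', y) ≤ H (t, y) := by
    intro t
    have hopen : ∀ y : P, IsOpen (⇑H ⁻¹' {z | z ≤ H (t, y)}) := fun y =>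
      H.continuous.isOpen_preimage _ ((hP _).mpr fun a b hb ha => hb.trans ha)
    choose W V hW hV htW hyV hsub using fun y : P =>
      isOpen_prod_iff.mp (hopen y) t y (le_refl _)
    refine ⟨⋂ y, W y, isOpen_iInter_of_finite hW, mem_iInter.mpr htW, ?_⟩
    intro t' ht' y
    exact hsub y ⟨mem_iInter.mp ht' y, hyV y⟩
  have hHcont : ∀ t : unitInterval, Continuous (fun y => H (t, y)) := fun t =>
    H.continuous.comp (continuous_const.prodMk continuous_id)
  set S : Set unitInterval := {t | FenceTo (⇑u) (fun y => H (t, y))} with hS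
  have hSopen : IsOpen S := by
    rw [isOpen_iff_forall_mem_open]
    intro t ht
    obtain ⟨W, hWo, htW, hWle⟩ := key t
    exact ⟨W, fun t' ht' => FenceTo.extend ht (hHcont t') (Or.inr (hWle t' ht')), hWo, htW⟩
  have hScopen : IsOpen Sᶜ := by
    rw [isOpen_iff_forall_mem_open]
    intro t ht
    obtain ⟨W, hWo, htW, hWle⟩ := key t
    refine ⟨W, fun t' ht' hmem => ht ?_, hWo, htW⟩
    exact FenceTo.extend hmem (hHcont t) (Or.inl (hWle t' ht'))
  have h0 : (0 : unitInterval) ∈ S := by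
    refine ⟨0, fun _ => ⇑u, rfl, ?_, fun _ => u.continuous, by omega⟩
    funext y
    exact (H.apply_zero y).symm
  have hSuniv : S = Set.univ :=
    IsClopen.eq_univ ⟨isOpen_compl_iff.mp hScopen, hSopen⟩ ⟨0, h0⟩
  have h1 : (1 : unitInterval) ∈ S := hSuniv ▸ Set.mem_univ _
  obtain ⟨k, c, hc0, hck, hcont, hstep⟩ := h1
  refine ⟨k, c, hc0, ?_, hcont, hstep⟩
  rw [hck]
  funext y
  exact H.apply_one y

end HomotopyFence

section Transfer

variable {P Q : Type} [PartialOrder P] [PartialOrder Q]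
  [TopologicalSpace P] [TopologicalSpace Q]

lemma section_transfer
    (hP : ∀ s : Set P, IsOpen s ↔ IsLowerSet s) (hQ : ∀ s : Set Q, IsOpen s ↔ IsLowerSet s)
    (f : C(P, Q)) (g : C(Q, P)) (k : ℕ) (c : ℕ → P → P)
    (hc0 : c 0 = ⇑(g.comp f)) (hck : c k = ⇑(ContinuousMap.id P))
    (hccont : ∀ i, Continuous (c i))
    (hcstep : ∀ i < k, (∀ y, c i y ≤ c (i+1) y) ∨ (∀ y, c (i+1) y ≤ c i y))
    (m : ℕ) (U : Set (Q × Q)) (s : C(U, C(J m, Q)))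
    (hs : ∀ x : U, (s x) J.zero = (x : Q × Q).1 ∧ (s x) J.last = (x : Q × Q).2) :
    ∃ s' : C(((fun x : P × P => (f x.1, f x.2)) ⁻¹' U), C(J (4*k + (m + m % 2)), P)),
      ∀ x : ((fun x : P × P => (f x.1, f x.2)) ⁻¹' U),
        (s' x) J.zero = (x : P × P).1 ∧ (s' x) J.last = (x : P × P).2 := by
  set L := 4*k + (m + m % 2) with hL
  set V := (fun x : P × P => (f x.1, f x.2)) ⁻¹' U with hVdef
  let fmap : C(V, U) := ⟨fun x => ⟨(f x.val.1, f x.val.2), x.2⟩, by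
    apply Continuous.subtype_mk
    exact ((f.continuous.comp (continuous_fst.comp continuous_subtype_val)).prodMk
      (f.continuous.comp (continuous_snd.comp continuous_subtype_val)))⟩
  have hg : Monotone ⇑g := alex_continuous_mono hQ hP g.continuous
  have hcmono : ∀ j, Monotone (c j) := fun j => alex_continuous_mono hP hP (hccont j)
  have hγmono : ∀ x : V, Monotone ⇑(s (fmap x)) := fun x =>
    alex_continuous_mono (alex_J m) hQ (s (fmap x)).continuous
  have hγ0 : ∀ x : V, g ((s (fmap x)) J.zero) = c 0 x.val.1 := by
    intro x
    rw [(hs (fmap x)).1, hc0]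
    rfl
  have hγ1 : ∀ x : V, g ((s (fmap x)) J.last) = c 0 x.val.2 := by
    intro x
    rw [(hs (fmap x)).2, hc0]
    rfl
  have hsm : ∀ jj : J m, Monotone (fun x : V => s (fmap x) jj) := fun jj =>
    alex_continuous_mono (alex_subtype (alex_prod hP hP) V) hQ
      ((continuous_eval_const jj).comp (s.continuous.comp fmap.continuous))
  let G : V × J L → P := fun z =>
    phi c k m g (⇑(s (fmap z.1))) z.1.val.1 z.1.val.2 (J.val z.2)
  have hmonoG : Monotone G := by
    rintro ⟨x, j⟩ ⟨x', j'⟩ ⟨hx0, hj0⟩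
    have hx : x ≤ x' := hx0
    have hj : j ≤ j' := hj0
    have step2 : phi c k m g (⇑(s (fmap x))) x.val.1 x.val.2 (J.val j') ≤
        phi c k m g (⇑(s (fmap x'))) x'.val.1 x'.val.2 (J.val j') := by
      have hxle : x.val ≤ x'.val := hx
      exact phi_mono_x c k m g _ x.val.1 x.val.2 hg hcmono
        (fun jj => hsm jj hx) hxle.1 hxle.2 _
    refine le_trans ?_ step2
    have hfence := phi_fence c k m g (⇑(s (fmap x))) x.val.1 x.val.2 hcstep hg
      (hγmono x) (hγ0 x) (hγ1 x)
    have hjval : J.val j' ≤ L := by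
      have := (j' : Fin (L+1)).isLt
      exact Nat.lt_succ_iff.mp this
    rcases (J.le_iff.mp hj) with he | ⟨hodd, he | he⟩
    · rw [@Fin.val_injective (L+1) j j' he]
    · -- J.val j' = J.val j + 1, j' odd
      have := (hfence (J.val j) (by omega)).1 (by omega)
      rw [← he] at this
      exact this
    · -- J.val j = J.val j' + 1, j' odd
      have := (hfence (J.val j') (by omega)).2 hodd
      rw [← he] at this
      exact this
  have hGcont : Continuous G :=
    alex_mono_continuous (alex_prod (alex_subtype (alex_prod hP hP) V) (alex_J L)) hP hmonoG
  refine ⟨ContinuousMap.curry ⟨G, hGcont⟩, fun x => ⟨?_, ?_⟩⟩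
  · show G (x, J.zero) = x.val.1
    have hz : J.val (J.zero : J L) = 0 := Fin.val_zero _
    show phi c k m g (⇑(s (fmap x))) x.val.1 x.val.2 (J.val (J.zero : J L)) = x.val.1
    rw [hz]
    exact phi_zero c k m g _ x.val.1 x.val.2 (fun y => by rw [hck]; rfl) (hγ0 x)
  · show G (x, J.last) = x.val.2
    have hz : J.val (J.last : J L) = L := rfl
    show phi c k m g (⇑(s (fmap x))) x.val.1 x.val.2 (J.val (J.last : J L)) = x.val.2
    rw [hz, hL]
    exact phi_last c k m g _ x.val.1 x.val.2 (fun y => by rw [hck]; rfl) (hγ1 x)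

lemma cover_transfer [Finite P]
    (hP : ∀ s : Set P, IsOpen s ↔ IsLowerSet s) (hQ : ∀ s : Set Q, IsOpen s ↔ IsLowerSet s)
    (f : C(P, Q)) (g : C(Q, P)) (hgf : (g.comp f).Homotopic (ContinuousMap.id P))
    {m n : ℕ} (hc : hasCCCover Q m n) : ∃ m', hasCCCover P m' n := by
  obtain ⟨U, hUopen, hUcov, hUsec⟩ := hc
  obtain ⟨k, c, hc0, hck, hccont, hcstep⟩ := homotopic_fence hP hgf
  refine ⟨4*k + (m + m % 2), fun i => (fun x : P × P => (f x.1, f x.2)) ⁻¹' (U i), ?_, ?_, ?_⟩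
  · intro i
    exact (hUopen i).preimage ((f.continuous.comp continuous_fst).prodMk
      (f.continuous.comp continuous_snd))
  · rw [Set.eq_univ_iff_forall]
    intro x
    have := Set.eq_univ_iff_forall.mp hUcov (f x.1, f x.2)
    obtain ⟨i, hi⟩ := Set.mem_iUnion.mp this
    exact Set.mem_iUnion.mpr ⟨i, hi⟩
  · intro i
    obtain ⟨s, hs⟩ := hUsec i
    exact section_transfer hP hQ f g k c hc0 hck hccont hcstep m (U i) s hs

lemma CC_le_CC [Finite P]
    (hP : ∀ s : Set P, IsOpen s ↔ IsLowerSet s) (hQ : ∀ s : Set Q, IsOpen s ↔ IsLowerSet s)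
    (f : C(P, Q)) (g : C(Q, P)) (hgf : (g.comp f).Homotopic (ContinuousMap.id P)) :
    CC P ≤ CC Q := by
  rw [show CC Q = ⨅ m, CCm Q m from rfl]
  refine le_iInf fun m => le_sInf ?_
  rintro a ⟨n, hn, rfl⟩
  obtain ⟨m', hm'⟩ := cover_transfer hP hQ f g hgf hn
  calc CC P ≤ CCm P m' := iInf_le _ _
    _ ≤ n := sInf_le ⟨n, hm', rfl⟩

end Transfer

/-- Combinatorial complexity is a homotopy invariant of finite spaces. -/
theorem CC_homotopy_invariant
    (P Q : Type) [PartialOrder P] [PartialOrder Q] [Finite P] [Finite Q]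
    [TopologicalSpace P] [TopologicalSpace Q]
    [PathConnectedSpace P] [PathConnectedSpace Q]
    (hP : ∀ s : Set P, IsOpen s ↔ IsLowerSet s)
    (hQ : ∀ s : Set Q, IsOpen s ↔ IsLowerSet s)
    (h : Nonempty (ContinuousMap.HomotopyEquiv P Q)) :
    CC P = CC Q := by
  obtain ⟨e⟩ := h
  exact le_antisymm
    (CC_le_CC hP hQ e.toFun e.invFun e.left_inv)
    (CC_le_CC hQ hP e.invFun e.toFun e.right_inv)
end
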